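/- (Scalar Riccati boundedness, stationary version) Let A, B ∈ ℝ with B ≠ 0, and Q, R > 0. For stable K (i.e., |A - BK| < 1), define P(K) = (Q + K²R)/(1 - (A-BK)²). Then P(K) is minimized over stable K at K̂ = (-R + A²R - B²Q + √((R - A²R + B²Q)² + 4A²B²RQ))/(2ABR) (when A ≠ 0), and the minimum value is P̃ = (A²R - R + QB² + √((R - A²R - QB²)² + 4B²QR))/(2B²). -/

import Mathlib

set_option maxHeartbeats 1000000

theorem scalar_riccati_minimum (A B Q R : ℝ) (hB : B ≠ 0) (hA : A ≠ 0)
    (hQ : 0 < Q) (hR : 0 < R) :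
    let P : ℝ → ℝ := fun K => (Q + K ^ 2 * R) / (1 - (A - B * K) ^ 2)
    let Khat : ℝ := (-R + A ^ 2 * R - B ^ 2 * Q +
      Real.sqrt ((R - A ^ 2 * R + B ^ 2 * Q) ^ 2 + 4 * A ^ 2 * B ^ 2 * R * Q)) / (2 * A * B * R)
    let Ptilde : ℝ := (A ^ 2 * R - R + Q * B ^ 2 +
      Real.sqrt ((R - A ^ 2 * R - Q * B ^ 2) ^ 2 + 4 * B ^ 2 * Q * R)) / (2 * B ^ 2)
    |A - B * Khat| < 1 ∧ P Khat = Ptilde ∧ ∀ K : ℝ, |A - B * K| < 1 → Ptilde ≤ P K := by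
  intro P Khat Ptilde
  have hB2 : 0 < B ^ 2 := by positivity
  set t := Real.sqrt ((R - A ^ 2 * R - Q * B ^ 2) ^ 2 + 4 * B ^ 2 * Q * R) with ht
  have harg : 0 ≤ (R - A ^ 2 * R - Q * B ^ 2) ^ 2 + 4 * B ^ 2 * Q * R := by positivity
  have ht2 : t ^ 2 = (R - A ^ 2 * R - Q * B ^ 2) ^ 2 + 4 * B ^ 2 * Q * R := Real.sq_sqrt harg
  have ht0 : 0 ≤ t := Real.sqrt_nonneg _
  have hargs : (R - A ^ 2 * R + B ^ 2 * Q) ^ 2 + 4 * A ^ 2 * B ^ 2 * R * Q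
      = (R - A ^ 2 * R - Q * B ^ 2) ^ 2 + 4 * B ^ 2 * Q * R := by ring
  have hPt : Ptilde = (A ^ 2 * R - R + Q * B ^ 2 + t) / (2 * B ^ 2) := rfl
  have hKd : Khat = (-R + A ^ 2 * R - B ^ 2 * Q + t) / (2 * A * B * R) := by
    have : Khat = (-R + A ^ 2 * R - B ^ 2 * Q +
      Real.sqrt ((R - A ^ 2 * R + B ^ 2 * Q) ^ 2 + 4 * A ^ 2 * B ^ 2 * R * Q)) / (2 * A * B * R) := rfl
    rw [this, hargs, ← ht]
  clear_value t Khat Ptilde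
  have hnum : 0 < A ^ 2 * R - R + Q * B ^ 2 + t := by
    nlinarith [ht2, ht0, sq_nonneg (R - A ^ 2 * R - Q * B ^ 2 - t),
      mul_pos (mul_pos hB2 hQ) hR]
  have hPpos : 0 < Ptilde := by rw [hPt]; positivity
  have are : B ^ 2 * Ptilde ^ 2 + Ptilde * (R - A ^ 2 * R - Q * B ^ 2) - Q * R = 0 := by
    rw [hPt]; field_simp; linear_combination ht2
  have hD : 0 < R + B ^ 2 * Ptilde := by nlinarith [mul_pos hB2 hPpos]
  have hKey : (R + B ^ 2 * Ptilde) * Khat = A * B * Ptilde := by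
    rw [hKd, hPt]; field_simp; linear_combination ht2
  have hABK : (R + B ^ 2 * Ptilde) * (A - B * Khat) = A * R := by
    linear_combination (-B) * hKey
  have hDval : R + B ^ 2 * Ptilde = (A ^ 2 * R + R + Q * B ^ 2 + t) / 2 := by
    rw [hPt]; field_simp; ring
  have hs : 0 < A ^ 2 * R + R := by positivity
  have hq : 0 < Q * B ^ 2 + t := by nlinarith [mul_pos hQ hB2]
  have h1 : A ^ 2 * R ^ 2 < (R + B ^ 2 * Ptilde) ^ 2 := by
    rw [hDval]
    nlinarith [mul_pos hs hq, sq_nonneg (A ^ 2 * R - R), sq_nonneg (Q * B ^ 2 + t)]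
  have h2 : (R + B ^ 2 * Ptilde) ^ 2 * (A - B * Khat) ^ 2 = A ^ 2 * R ^ 2 := by
    linear_combination ((R + B ^ 2 * Ptilde) * (A - B * Khat) + A * R) * hABK
  have hstab : (A - B * Khat) ^ 2 < 1 := by nlinarith [h1, h2, mul_pos hD hD]
  have hquad : ∀ K : ℝ, (R + B ^ 2 * Ptilde) *
      (Q + K ^ 2 * R + Ptilde * (A - B * K) ^ 2 - Ptilde)
      = ((R + B ^ 2 * Ptilde) * K - A * B * Ptilde) ^ 2 := by
    intro K; linear_combination (-1 : ℝ) * are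
  have habs : |A - B * Khat| < 1 := by
    rw [abs_lt]; constructor <;> nlinarith [hstab]
  refine ⟨habs, ?_, ?_⟩
  · have hdK : 0 < 1 - (A - B * Khat) ^ 2 := by linarith
    have hz : Q + Khat ^ 2 * R + Ptilde * (A - B * Khat) ^ 2 - Ptilde = 0 := by
      have h := hquad Khat
      rw [hKey] at h
      have : ((R + B ^ 2 * Ptilde) * Khat - A * B * Ptilde) ^ 2 = 0 := by
        rw [hKey]; ring
      nlinarith [this, hquad Khat, hD]
    show (Q + Khat ^ 2 * R) / (1 - (A - B * Khat) ^ 2) = Ptilde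
    rw [div_eq_iff (ne_of_gt hdK)]
    linarith [hz]
  · intro K hK
    have hK2 : (A - B * K) ^ 2 < 1 := by
      have h := abs_lt.mp hK
      nlinarith [h.1, h.2]
    have hdK : 0 < 1 - (A - B * K) ^ 2 := by linarith
    show Ptilde ≤ (Q + K ^ 2 * R) / (1 - (A - B * K) ^ 2)
    rw [le_div_iff₀ hdK]
    nlinarith [hquad K, sq_nonneg ((R + B ^ 2 * Ptilde) * K - A * B * Ptilde), hD]
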